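/- Let t < 0 and let z(t,x) be the unique real root of x = t·z − z³. Then the second derivative satisfies z_{xx}(t,x) = 6z/(t − 3z²)³, and |z_{xx}(t,x)| < |t|^{−5/2}. Moreover z_{xx}(t,x) ≤ 0 for x ≤ 0 and z_{xx}(t,x) ≥ 0 for x ≥ 0. -/

import Mathlib

private lemma bb_key_ineq (u a : ℝ) (hu : 0 ≤ u) (ha : 0 < a) :
    36 * u * a^5 < (3*u+a)^6 := by
  nlinarith [sq_nonneg (15*u - a), pow_pos ha 6,
    mul_nonneg (mul_nonneg hu hu) (sq_nonneg (15*u-a)),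
    mul_nonneg (mul_nonneg ha.le ha.le) (sq_nonneg (15*u-a)),
    mul_nonneg (mul_nonneg hu ha.le) (sq_nonneg (15*u-a)),
    mul_nonneg hu ha.le, pow_pos ha 4, sq_nonneg u]

/-- For `t < 0`, the second derivative of the root `z(t,·)` of `x = t·z − z³`
equals `6z/(t − 3z²)³`, is bounded in absolute value by `|t|^(−5/2)`, and is
nonpositive for `x ≤ 0`, nonnegative for `x ≥ 0`. -/
theorem backward_burgers_root_second_derivative (t : ℝ) (ht : t < 0)
    (Z : ℝ → ℝ) (hZ : ∀ x : ℝ, x = t * Z x - (Z x) ^ 3) (x : ℝ) :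
    deriv (deriv Z) x = 6 * Z x / (t - 3 * (Z x) ^ 2) ^ 3 ∧
    |deriv (deriv Z) x| < |t| ^ (-(5 : ℝ) / 2) ∧
    (x ≤ 0 → deriv (deriv Z) x ≤ 0) ∧
    (0 ≤ x → 0 ≤ deriv (deriv Z) x) := by
  set g : ℝ → ℝ := fun z => t * z - z ^ 3 with hg
  have hgZ : ∀ y : ℝ, g (Z y) = y := fun y => (hZ y).symm
  have hanti : StrictAnti g := by
    intro z₁ z₂ h12
    simp only [hg]
    nlinarith [sq_nonneg (z₁ + z₂), sq_nonneg z₁, sq_nonneg z₂, sq_nonneg (z₁ - z₂)]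
  have hZanti : Antitone Z := by
    intro x₁ x₂ h12
    by_contra hc
    push_neg at hc
    have h := hanti hc
    rw [hgZ, hgZ] at h
    linarith
  have hZg : ∀ z : ℝ, Z (g z) = z := fun z => hanti.injective (hgZ (g z))
  have hZcont : Continuous Z := by
    have hmono : Monotone (fun y => -Z y) := fun a b hab => neg_le_neg (hZanti hab)
    have hsurj : Function.Surjective (fun y => -Z y) := by
      intro z
      exact ⟨g (-z), by simp [hZg]⟩
    have := hmono.continuous_of_surjective hsurj
    exact this.neg.congr fun y => neg_neg (Z y)
  have hwneg : ∀ z : ℝ, t - 3 * z ^ 2 < 0 := fun z => by nlinarith [sq_nonneg z]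
  have hZderiv : ∀ y : ℝ, HasDerivAt Z (t - 3 * (Z y) ^ 2)⁻¹ y := by
    intro y
    have hgd : HasDerivAt g (t - 3 * (Z y) ^ 2) (Z y) := by
      have h1 : HasDerivAt (fun z : ℝ => t * z - z ^ 3)
          (t * 1 - ↑3 * Z y ^ (3 - 1)) (Z y) :=
        ((hasDerivAt_id (Z y)).const_mul t).sub (hasDerivAt_pow 3 (Z y))
      convert h1 using 1
      push_cast
      ring
    exact hgd.of_local_left_inverse hZcont.continuousAt (ne_of_lt (hwneg (Z y)))
      (Filter.Eventually.of_forall hgZ)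
  have hderivZ : deriv Z = fun y => (t - 3 * (Z y) ^ 2)⁻¹ := funext fun y => (hZderiv y).deriv
  set z := Z x with hz
  set w := t - 3 * z ^ 2 with hw
  have hw0 : w < 0 := hwneg z
  have hwne : w ≠ 0 := ne_of_lt hw0
  have hw3 : w ^ 3 < 0 := Odd.pow_neg (by decide) hw0
  have hsecond : deriv (deriv Z) x = 6 * z / w ^ 3 := by
    rw [hderivZ]
    have h2 : HasDerivAt (fun y => (Z y) ^ 2) (↑2 * Z x ^ (2 - 1) * w⁻¹) x :=
      (hZderiv x).pow 2
    have hin : HasDerivAt (fun y => t - 3 * (Z y) ^ 2)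
        (-(3 * (↑2 * Z x ^ (2 - 1) * w⁻¹))) x := (h2.const_mul 3).const_sub t
    rw [show (fun y => (t - 3 * Z y ^ 2)⁻¹) = (fun y => t - 3 * Z y ^ 2)⁻¹ from rfl,
      (hin.inv hwne).deriv]
    change _ / w ^ 2 = _
    field_simp
    ring
  refine ⟨hsecond, ?_, ?_, ?_⟩
  · set a : ℝ := -t with ha
    have ha0 : 0 < a := by linarith
    set s := Real.sqrt a with hs
    have hs0 : 0 < s := Real.sqrt_pos.2 ha0
    have hs2 : s ^ 2 = a := Real.sq_sqrt ha0.le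
    have habs : |t| = a := abs_of_neg ht
    have hwa : 0 < 3 * z ^ 2 + a := by nlinarith [sq_nonneg z]
    have hrpow : |t| ^ (-(5 : ℝ) / 2) = (s ^ 5)⁻¹ := by
      rw [habs, hs, Real.sqrt_eq_rpow, ← Real.rpow_natCast (a ^ ((1:ℝ)/2)) 5,
        ← Real.rpow_mul ha0.le, ← Real.rpow_neg_one (a ^ _), ← Real.rpow_mul ha0.le]
      norm_num
    rw [hsecond, hrpow]
    have habsd : |6 * z / w ^ 3| = 6 * |z| / (3 * z ^ 2 + a) ^ 3 := by
      rw [abs_div, abs_mul]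
      congr 1
      · norm_num
      · rw [abs_pow, abs_of_neg hw0, hw, ha]
        ring_nf
    rw [habsd, div_lt_iff₀ (by positivity), inv_mul_eq_div,
      lt_div_iff₀ (by positivity : (0:ℝ) < s ^ 5)]
    have hpow : (6 * |z| * s ^ 5) ^ 2 < ((3 * z ^ 2 + a) ^ 3) ^ 2 := by
      have h1 : (6 * |z| * s ^ 5) ^ 2 = 36 * z ^ 2 * a ^ 5 := by
        have hza : |z| ^ 2 = z ^ 2 := sq_abs z
        calc (6 * |z| * s ^ 5) ^ 2 = 36 * |z| ^ 2 * (s ^ 2) ^ 5 := by ring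
          _ = 36 * z ^ 2 * a ^ 5 := by rw [hza, hs2]
      have h2 : ((3 * z ^ 2 + a) ^ 3) ^ 2 = (3 * z ^ 2 + a) ^ 6 := by ring
      rw [h1, h2]
      exact bb_key_ineq (z ^ 2) a (sq_nonneg z) ha0
    exact lt_of_pow_lt_pow_left₀ 2 (by positivity) hpow
  · intro hx
    rw [hsecond]
    have hz0 : 0 ≤ z := by
      by_contra hc
      push_neg at hc
      have hxe := hZ x
      nlinarith [mul_pos (neg_pos.2 hc) (show 0 < z ^ 2 - t by nlinarith [sq_nonneg z])]
    exact div_nonpos_iff.2 (Or.inl ⟨by linarith, hw3.le⟩)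
  · intro hx
    rw [hsecond]
    have hz0 : z ≤ 0 := by
      by_contra hc
      push_neg at hc
      have hxe := hZ x
      nlinarith [mul_pos hc (show 0 < z ^ 2 - t by nlinarith [sq_nonneg z])]
    exact div_nonneg_of_nonpos (by linarith) hw3.le
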